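/- Let m be a positive integer and x a real number. Then for every n ≥ 0, the Tanny-Dowling polynomials are the binomial transform of the bivariate geometric polynomials: 𝓕_m(n,x) = ∑_{k=0}^n C(n,k)·ω_k(x,m). -/

import Mathlib

/-- Whitney numbers of the second kind:
`W_m(n,k) = (1/(m^k k!)) ∑_{i=0}^k (−1)^{k−i} C(k,i) (mi+1)^n`. -/
noncomputable def whitney2 (m n k : ℕ) : ℝ :=
  (1 / ((m : ℝ) ^ k * k.factorial)) *
    ∑ i ∈ Finset.range (k + 1), (-1 : ℝ) ^ (k - i) * (k.choose i) * ((m : ℝ) * i + 1) ^ n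

/-- Tanny–Dowling polynomials `𝓕_m(n,x) = ∑_{k=0}^n k!·W_m(n,k)·x^k`. -/
noncomputable def tannyDowling (m n : ℕ) (x : ℝ) : ℝ :=
  ∑ k ∈ Finset.range (n + 1), (k.factorial : ℝ) * whitney2 m n k * x ^ k

/-- Stirling numbers of the second kind:
`S(n,k) = (1/k!) ∑_{j=0}^k (−1)^{k−j} C(k,j) j^n`. -/
noncomputable def stirling2 (n k : ℕ) : ℝ :=
  (1 / (k.factorial : ℝ)) *
    ∑ j ∈ Finset.range (k + 1), (-1 : ℝ) ^ (k - j) * (k.choose j) * (j : ℝ) ^ n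

/-- Bivariate geometric polynomials `ω_n(x,m) = ∑_{k=0}^n k!·S(n,k)·x^k·m^{n−k}`. -/
noncomputable def geomPoly (n : ℕ) (x : ℝ) (m : ℕ) : ℝ :=
  ∑ k ∈ Finset.range (n + 1), (k.factorial : ℝ) * stirling2 n k * x ^ k * (m : ℝ) ^ (n - k)

lemma fwdDiff_pow_nat (r : ℕ) :
    fwdDiff (1:ℕ) (fun i : ℕ ↦ (i : ℝ) ^ r) =
      fun i : ℕ ↦ ∑ j ∈ Finset.range r, (r.choose j : ℝ) * (i : ℝ) ^ j := by
  ext i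
  simp only [fwdDiff]
  push_cast
  rw [add_pow, Finset.sum_range_succ]
  simp [Nat.choose_self, mul_comm]

lemma fwdDiff_iter_pow_eq_zero : ∀ r k : ℕ, r < k →
    (fwdDiff (1:ℕ))^[k] (fun i : ℕ ↦ (i : ℝ) ^ r) = 0 := by
  intro r
  induction r using Nat.strong_induction_on with
  | _ r IH =>
    intro k hk
    match k, hk with
    | k + 1, hk =>
      rw [Function.iterate_succ_apply, fwdDiff_pow_nat]
      have : (fun i : ℕ ↦ ∑ j ∈ Finset.range r, (r.choose j : ℝ) * (i : ℝ) ^ j)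
          = ∑ j ∈ Finset.range r, (r.choose j : ℝ) • (fun i : ℕ ↦ (i : ℝ) ^ j) := by
        ext i; simp [Finset.sum_apply]
      rw [this, fwdDiff_iter_finset_sum]
      refine Finset.sum_eq_zero fun j hj ↦ ?_
      rw [fwdDiff_iter_const_smul, IH j (Finset.mem_range.mp hj) k
        (by have := Finset.mem_range.mp hj; omega), smul_zero]

lemma B_vanish (r k : ℕ) (h : r < k) :
    ∑ j ∈ Finset.range (k + 1), (-1 : ℝ) ^ (k - j) * (k.choose j) * (j : ℝ) ^ r = 0 := by
  have H := fwdDiff_iter_eq_sum_shift (1 : ℕ) (fun i : ℕ ↦ (i : ℝ) ^ r) k 0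
  rw [fwdDiff_iter_pow_eq_zero r k h] at H
  simp only [Pi.zero_apply, zero_add, smul_eq_mul, zsmul_eq_mul, mul_one] at H
  rw [eq_comm, H]
  refine Finset.sum_congr rfl fun j hj ↦ ?_
  push_cast
  ring

/-- The Tanny–Dowling polynomials are the binomial transform of the bivariate geometric
polynomials: `𝓕_m(n,x) = ∑_{k=0}^n C(n,k)·ω_k(x,m)`. -/
theorem tannyDowling_binomial_transform (m : ℕ) (hm : 0 < m) (x : ℝ) (n : ℕ) :
    tannyDowling m n x = ∑ k ∈ Finset.range (n + 1), (n.choose k : ℝ) * geomPoly k x m := by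
  have hm0 : (m : ℝ) ≠ 0 := Nat.cast_ne_zero.mpr hm.ne'
  set B : ℕ → ℕ → ℝ := fun r k ↦
    ∑ j ∈ Finset.range (k + 1), (-1 : ℝ) ^ (k - j) * (k.choose j) * (j : ℝ) ^ r with hB
  -- LHS
  have lhs : tannyDowling m n x
      = ∑ k ∈ Finset.range (n + 1), ∑ r ∈ Finset.range (n + 1),
          (n.choose r : ℝ) * ((m : ℝ) ^ r / (m : ℝ) ^ k) * x ^ k * B r k := by
    unfold tannyDowling whitney2
    refine Finset.sum_congr rfl fun k _ ↦ ?_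
    have hfac : (k.factorial : ℝ) ≠ 0 := Nat.cast_ne_zero.mpr k.factorial_ne_zero
    have expand : ∀ i : ℕ, ((m : ℝ) * i + 1) ^ n
        = ∑ r ∈ Finset.range (n + 1), (n.choose r : ℝ) * ((m : ℝ) ^ r * (i : ℝ) ^ r) := by
      intro i
      rw [add_pow]
      exact Finset.sum_congr rfl fun r _ ↦ by rw [mul_pow]; ring
    calc (k.factorial : ℝ) * ((1 / ((m : ℝ) ^ k * k.factorial)) *
            ∑ i ∈ Finset.range (k + 1), (-1 : ℝ) ^ (k - i) * (k.choose i)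
              * ((m : ℝ) * i + 1) ^ n) * x ^ k
        = ∑ i ∈ Finset.range (k + 1), ∑ r ∈ Finset.range (n + 1),
            (n.choose r : ℝ) * ((m : ℝ) ^ r / (m : ℝ) ^ k) * x ^ k
              * ((-1 : ℝ) ^ (k - i) * (k.choose i) * (i : ℝ) ^ r) := by
          simp only [Finset.mul_sum, Finset.sum_mul]
          refine Finset.sum_congr rfl fun i _ ↦ ?_
          rw [expand i]
          simp only [Finset.mul_sum, Finset.sum_mul]
          refine Finset.sum_congr rfl fun r _ ↦ ?_
          field_simp
      _ = ∑ r ∈ Finset.range (n + 1),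
            (n.choose r : ℝ) * ((m : ℝ) ^ r / (m : ℝ) ^ k) * x ^ k * B r k := by
          rw [Finset.sum_comm]
          exact Finset.sum_congr rfl fun r _ ↦ (Finset.mul_sum ..).symm
  rw [lhs, Finset.sum_comm]
  -- RHS termwise
  refine Finset.sum_congr rfl fun r hr ↦ ?_
  rw [Finset.mem_range] at hr
  have geom : geomPoly r x m
      = ∑ k ∈ Finset.range (n + 1), ((m : ℝ) ^ r / (m : ℝ) ^ k) * x ^ k * B r k := by
    unfold geomPoly stirling2
    rw [eq_comm, ← Finset.sum_subset (Finset.range_subset_range.mpr (by omega : r + 1 ≤ n + 1))]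
    · refine Finset.sum_congr rfl fun k hk ↦ ?_
      rw [Finset.mem_range] at hk
      have hfac : (k.factorial : ℝ) ≠ 0 := Nat.cast_ne_zero.mpr k.factorial_ne_zero
      have hpow : (m : ℝ) ^ (r - k) = (m : ℝ) ^ r / (m : ℝ) ^ k :=
        pow_sub₀ _ hm0 (by omega)
      rw [hpow]
      field_simp
      ring
    · intro k hk1 hk2
      rw [Finset.mem_range] at hk1
      rw [Finset.mem_range] at hk2
      have : B r k = 0 := B_vanish r k (by omega)
      rw [this, mul_zero]
  rw [geom, Finset.mul_sum]
  exact Finset.sum_congr rfl fun k _ ↦ by ring
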